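/- Let f : ℝ → ℝ be continuously differentiable and T-periodic with f(0) = 0, and suppose |f(t)| ≤ C·t for all t ≥ 0 (some C > 0) and |f| ≤ B globally. Then there exists n* ∈ ℕ such that |f(t)| < (T/2)·t·(n*T − t) for all t ∈ (0, n*T). -/

import Mathlib

theorem claim1_existence_of_nstar
    (T : ℝ) (hT : 0 < T) (f : ℝ → ℝ)
    (hC1 : ContDiff ℝ 1 f)
    (hper : ∀ t, f (t + T) = f t)
    (hf0 : f 0 = 0)
    (C : ℝ) (hC : 0 < C)
    (hlin : ∀ t, 0 ≤ t → |f t| ≤ C * t)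
    (B : ℝ) (hB : ∀ t, |f t| ≤ B) :
    ∃ nstar : ℕ, 0 < nstar ∧
      ∀ t, 0 < t → t < nstar * T → |f t| < (T / 2) * t * (nstar * T - t) := by
  have hperf : Function.Periodic f T := hper
  have hdf : Differentiable ℝ f := hC1.differentiable one_ne_zero
  have hdc : Continuous (deriv f) := hC1.continuous_deriv le_rfl
  have hdper : Function.Periodic (deriv f) T := by
    intro x
    have h1 : (fun y => f (y + T)) = f := funext hper
    calc deriv f (x + T) = deriv (fun y => f (y + T)) x := (deriv_comp_add_const f T x).symm
    _ = deriv f x := by rw [h1]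
  obtain ⟨M, hM⟩ := isCompact_Icc.exists_bound_of_continuousOn
    (hdc.continuousOn : ContinuousOn (deriv f) (Set.Icc (0:ℝ) T))
  set L : ℝ := max M 1 with hLdef
  have hL1 : (1:ℝ) ≤ L := le_max_right _ _
  have hL0 : (0:ℝ) ≤ L := by linarith
  have hbound : ∀ x, ‖deriv f x‖ ≤ L := by
    intro x
    obtain ⟨y, hy, hxy⟩ := hdper.exists_mem_Ico₀ hT x
    rw [hxy]
    exact le_trans (hM y ⟨hy.1, hy.2.le⟩) (le_max_left _ _)
  have hlip : LipschitzWith (Real.toNNReal L) f := by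
    apply lipschitzWith_of_nnnorm_deriv_le hdf
    intro x
    rw [← NNReal.coe_le_coe, coe_nnnorm, Real.coe_toNNReal _ hL0]
    exact hbound x
  have hlipR : ∀ a b : ℝ, |f a - f b| ≤ L * |a - b| := by
    intro a b
    have := hlip.dist_le_mul a b
    rwa [Real.dist_eq, Real.dist_eq, Real.coe_toNNReal _ hL0] at this
  refine ⟨⌈4 * L / T ^ 2⌉₊ + 1, Nat.succ_pos _, ?_⟩
  set n : ℕ := ⌈4 * L / T ^ 2⌉₊ + 1 with hn
  have hnL : 4 * L / T ^ 2 < (n : ℝ) := by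
    have := Nat.le_ceil (4 * L / T ^ 2)
    push_cast [hn]
    linarith
  have hT2 : (0:ℝ) < T ^ 2 := by positivity
  have hkey : 4 * L < (n : ℝ) * T ^ 2 := by
    rw [div_lt_iff₀ hT2] at hnL; linarith
  intro t ht htn
  have hfnT : f ((n : ℝ) * T) = 0 := by
    rw [hperf.nat_mul_eq n, hf0]
  rcases le_or_gt t ((n : ℝ) * T / 2) with hhalf | hhalf
  · have h1 : |f t| ≤ L * t := by
      have := hlipR t 0
      simpa [hf0, abs_of_pos ht] using this
    have h2 : L < (T / 2) * ((n : ℝ) * T - t) := by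
      have : (n : ℝ) * T - t ≥ (n : ℝ) * T / 2 := by linarith
      nlinarith
    calc |f t| ≤ L * t := h1
    _ < (T / 2) * ((n : ℝ) * T - t) * t := by nlinarith
    _ = (T / 2) * t * ((n : ℝ) * T - t) := by ring
  · have h1 : |f t| ≤ L * ((n : ℝ) * T - t) := by
      have := hlipR t ((n : ℝ) * T)
      rw [hfnT, sub_zero] at this
      rwa [abs_of_neg (by linarith : t - (n : ℝ) * T < 0), neg_sub] at this
    have h2 : L < (T / 2) * t := by nlinarith
    calc |f t| ≤ L * ((n : ℝ) * T - t) := h1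
    _ < (T / 2) * t * ((n : ℝ) * T - t) := by nlinarith
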